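/- Let λ be a positive integer, μ = 1/λ, F(ψ) = k/sin²(λψ + ψ₀), G(ψ) = cos(λψ + ψ₀). Then I_λ = (p_r + (1/(λr)) X_L)^λ G is a first integral of H = ½p_r² + (1/r²)(½p_ψ² + F(ψ)), i.e., X_H(I_λ) = 0 on the open set where r > 0 and sin(λψ + ψ₀) ≠ 0. -/

import Mathlib

open Real

/- Phase space coordinates: `x 0 = r`, `x 1 = ψ`, `x 2 = p_r`, `x 3 = p_ψ`. -/

/-- Partial derivative with respect to the `i`-th coordinate. -/
noncomputable def pd (i : Fin 4) (f : (Fin 4 → ℝ) → ℝ) (x : Fin 4 → ℝ) : ℝ :=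
  deriv (fun t => f (Function.update x i t)) (x i)

/-- The angular Hamiltonian `L = ½ p_ψ² + F(ψ)`. -/
noncomputable def Lfun (F : ℝ → ℝ) (x : Fin 4 → ℝ) : ℝ :=
  (1/2) * (x 3)^2 + F (x 1)

/-- The Hamiltonian vector field `X_L = p_ψ ∂/∂ψ − F'(ψ) ∂/∂p_ψ` as an operator. -/
noncomputable def XL (F : ℝ → ℝ) (f : (Fin 4 → ℝ) → ℝ) (x : Fin 4 → ℝ) : ℝ :=
  x 3 * pd 1 f x - deriv F (x 1) * pd 3 f x

/-- The Hamiltonian `H = ½ p_r² + (½ p_ψ² + F(ψ))/r²`. -/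
noncomputable def Hfun (F : ℝ → ℝ) (x : Fin 4 → ℝ) : ℝ :=
  (1/2) * (x 2)^2 + (1 / (x 0)^2) * ((1/2) * (x 3)^2 + F (x 1))

/-- The operator `U = p_r + (μ/r) X_L` (multiplication by `p_r` plus `(μ/r)·X_L`). -/
noncomputable def Uop (μ : ℝ) (F : ℝ → ℝ) (f : (Fin 4 → ℝ) → ℝ) (x : Fin 4 → ℝ) : ℝ :=
  x 2 * f x + (μ / x 0) * XL F f x

/-- The Hamiltonian vector field of `K` applied to `f`. -/
noncomputable def XHam (K f : (Fin 4 → ℝ) → ℝ) (x : Fin 4 → ℝ) : ℝ :=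
  pd 2 K x * pd 0 f x + pd 3 K x * pd 1 f x - pd 0 K x * pd 2 f x - pd 1 K x * pd 3 f x

noncomputable def AB (r p l : ℝ) : ℕ → ℝ × ℝ
  | 0 => (1, 0)
  | n+1 => (p * (AB r p l n).1 + 2*l/r * (AB r p l n).2,
            p * (AB r p l n).2 - (AB r p l n).1/r)


noncomputable def Fk (k ψ₀ : ℝ) (lam : ℕ) : ℝ → ℝ := fun ψ => k / (sin ((lam:ℝ) * ψ + ψ₀))^2

noncomputable def dFk (k ψ₀ : ℝ) (lam : ℕ) (t : ℝ) : ℝ :=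
  -(2*k*lam*cos ((lam:ℝ)*t+ψ₀))/(sin ((lam:ℝ)*t+ψ₀))^3

noncomputable def Lv (k ψ₀ : ℝ) (lam : ℕ) (x : Fin 4 → ℝ) : ℝ :=
  (1/2)*(x 3)^2 + Fk k ψ₀ lam (x 1)

noncomputable def frm (k ψ₀ : ℝ) (lam n : ℕ) (y : Fin 4 → ℝ) : ℝ :=
  (AB (y 0) (y 2) (Lv k ψ₀ lam y) n).1 * cos ((lam:ℝ)*y 1 + ψ₀)
  + (AB (y 0) (y 2) (Lv k ψ₀ lam y) n).2 * (y 3 * sin ((lam:ℝ)*y 1 + ψ₀))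


lemma hasDerivAt_theta (ψ₀ : ℝ) (lam : ℕ) (t : ℝ) :
    HasDerivAt (fun s => (lam:ℝ)*s+ψ₀) (lam:ℝ) t := by
  simpa using ((hasDerivAt_id t).const_mul (lam:ℝ)).add_const ψ₀

lemma hasDerivAt_sin_theta (ψ₀ : ℝ) (lam : ℕ) (t : ℝ) :
    HasDerivAt (fun s => sin ((lam:ℝ)*s+ψ₀)) (cos ((lam:ℝ)*t+ψ₀) * lam) t :=
  (Real.hasDerivAt_sin _).comp t (hasDerivAt_theta ψ₀ lam t)

lemma hasDerivAt_cos_theta (ψ₀ : ℝ) (lam : ℕ) (t : ℝ) :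
    HasDerivAt (fun s => cos ((lam:ℝ)*s+ψ₀)) (-sin ((lam:ℝ)*t+ψ₀) * lam) t :=
  (Real.hasDerivAt_cos _).comp t (hasDerivAt_theta ψ₀ lam t)

lemma hasDerivAt_Fk (k ψ₀ : ℝ) (lam : ℕ) {t : ℝ} (hs : sin ((lam:ℝ)*t+ψ₀) ≠ 0) :
    HasDerivAt (Fk k ψ₀ lam) (dFk k ψ₀ lam t) t := by
  have h3 := (hasDerivAt_sin_theta ψ₀ lam t).pow 2
  have h4 := (hasDerivAt_const t k).div h3 (pow_ne_zero 2 hs)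
  refine h4.congr_deriv ?_
  simp only [Pi.pow_apply]
  unfold dFk
  field_simp
  ring

lemma AB_hasDerivAt_r (p l : ℝ) {r : ℝ} (hr : r ≠ 0) : ∀ n : ℕ,
    HasDerivAt (fun s => (AB s p l (n+1)).1)
      (-(2*(n+1)*l/r^2) * (AB r p l n).2) r ∧
    HasDerivAt (fun s => (AB s p l (n+1)).2)
      (((n+1:ℕ))/r^2 * (AB r p l n).1) r := by
  intro n
  induction n with
  | zero =>
    constructor
    · have : (fun s => (AB s p l 1).1) = fun _ => p := by
        funext s; simp [AB]
      rw [this]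
      simpa [AB] using (hasDerivAt_const r p)
    · have : (fun s => (AB s p l 1).2) = fun s => -(1/s) := by
        funext s; simp [AB]
      rw [this]
      have h := (hasDerivAt_inv hr).neg
      rw [show (fun s : ℝ => -(1/s)) = -fun y => y⁻¹ by funext s; simp [one_div]]
      refine h.congr_deriv ?_
      norm_num [AB]
  | succ n ih =>
    obtain ⟨ihA, ihB⟩ := ih
    have hdiv : HasDerivAt (fun s : ℝ => 2*l/s) (-(2*l)/r^2) r := by
      have := (hasDerivAt_const r (2*l)).div (hasDerivAt_id r) hr
      refine this.congr_deriv ?_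
      simp only [id]
      ring
    constructor
    · have h : HasDerivAt (fun s => p * (AB s p l (n+1)).1 + 2*l/s * (AB s p l (n+1)).2)
          (p * (-(2*(n+1)*l/r^2) * (AB r p l n).2)
            + ((-(2*l)/r^2) * (AB r p l (n+1)).2 + 2*l/r * ((n+1:ℕ)/r^2 * (AB r p l n).1))) r :=
        (ihA.const_mul p).add (hdiv.mul ihB)
      have he : (fun s => (AB s p l (n+2)).1)
          = fun s => p * (AB s p l (n+1)).1 + 2*l/s * (AB s p l (n+1)).2 := by
        funext s; simp [AB]
      rw [he]
      convert h using 1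
      simp only [AB]
      push_cast
      field_simp
      ring
    · have h : HasDerivAt (fun s => p * (AB s p l (n+1)).2 - (AB s p l (n+1)).1/s)
          (p * ((n+1:ℕ)/r^2 * (AB r p l n).1)
            - ((-(2*(n+1)*l/r^2) * (AB r p l n).2) * r - (AB r p l (n+1)).1 * 1)/r^2) r :=
        (ihB.const_mul p).sub (ihA.div (hasDerivAt_id r) hr)
      have he : (fun s => (AB s p l (n+2)).2)
          = fun s => p * (AB s p l (n+1)).2 - (AB s p l (n+1)).1/s := by
        funext s; simp [AB]
      rw [he]
      convert h using 1
      simp only [AB]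
      push_cast
      field_simp
      ring

lemma AB_hasDerivAt_p (r l : ℝ) (p : ℝ) : ∀ n : ℕ,
    HasDerivAt (fun u => (AB r u l (n+1)).1) ((n+1:ℕ) * (AB r p l n).1) p ∧
    HasDerivAt (fun u => (AB r u l (n+1)).2) ((n+1:ℕ) * (AB r p l n).2) p := by
  intro n
  induction n with
  | zero =>
    constructor
    · have he : (fun u => (AB r u l 1).1) = fun u => u * 1 + 2*l/r*0 := by
        funext u; simp [AB]
      rw [he]
      have h := ((hasDerivAt_id p).mul_const (1:ℝ)).add_const (2*l/r*0)
      refine h.congr_deriv ?_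
      norm_num [AB]
    · have he : (fun u => (AB r u l 1).2) = fun _ => -(1/r) := by
        funext u; simp [AB]
      rw [he]
      have h := hasDerivAt_const p (-(1/r))
      refine h.congr_deriv ?_
      norm_num [AB]
  | succ n ih =>
    obtain ⟨ihA, ihB⟩ := ih
    constructor
    · have h : HasDerivAt (fun u => u * (AB r u l (n+1)).1 + 2*l/r * (AB r u l (n+1)).2)
          ((1 * (AB r p l (n+1)).1 + p * ((n+1:ℕ) * (AB r p l n).1))
            + 2*l/r * ((n+1:ℕ) * (AB r p l n).2)) p :=
        ((hasDerivAt_id p).mul ihA).add (ihB.const_mul (2*l/r))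
      have he : (fun u => (AB r u l (n+2)).1)
          = fun u => u * (AB r u l (n+1)).1 + 2*l/r * (AB r u l (n+1)).2 := by
        funext u; simp [AB]
      rw [he]
      convert h using 1
      simp only [AB]; push_cast; ring
    · have h : HasDerivAt (fun u => u * (AB r u l (n+1)).2 - (AB r u l (n+1)).1/r)
          ((1 * (AB r p l (n+1)).2 + p * ((n+1:ℕ) * (AB r p l n).2))
            - ((n+1:ℕ) * (AB r p l n).1)/r) p :=
        ((hasDerivAt_id p).mul ihB).sub (ihA.div_const r)
      have he : (fun u => (AB r u l (n+2)).2)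
          = fun u => u * (AB r u l (n+1)).2 - (AB r u l (n+1)).1/r := by
        funext u; simp [AB]
      rw [he]
      convert h using 1
      simp only [AB]; push_cast; ring

lemma AB_differentiable_l (r p : ℝ) (l : ℝ) (n : ℕ) :
    DifferentiableAt ℝ (fun t => (AB r p t n).1) l ∧
    DifferentiableAt ℝ (fun t => (AB r p t n).2) l := by
  induction n with
  | zero => simp [AB]
  | succ n ih =>
    obtain ⟨ihA, ihB⟩ := ih
    constructor
    · have : (fun t => (AB r p t (n+1)).1)
          = fun t => p * (AB r p t n).1 + 2*t/r * (AB r p t n).2 := by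
        funext t; simp [AB]
      rw [this]
      exact (ihA.const_mul p).add ((((differentiableAt_id).const_mul 2).div_const r).mul ihB)
    · have : (fun t => (AB r p t (n+1)).2)
          = fun t => p * (AB r p t n).2 - (AB r p t n).1/r := by
        funext t; simp [AB]
      rw [this]
      exact (ihB.const_mul p).sub (ihA.div_const r)

lemma pd1_val (k ψ₀ : ℝ) (lam n : ℕ) (f : (Fin 4 → ℝ) → ℝ)
    (hf : ∀ y : Fin 4 → ℝ, y 0 ≠ 0 → sin ((lam:ℝ)*y 1+ψ₀) ≠ 0 → f y = frm k ψ₀ lam n y)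
    (x : Fin 4 → ℝ) (hr : x 0 ≠ 0) (hs : sin ((lam:ℝ)*x 1+ψ₀) ≠ 0) :
    pd 1 f x =
      (deriv (fun t => (AB (x 0) (x 2) t n).1) (Lv k ψ₀ lam x) * dFk k ψ₀ lam (x 1))
          * cos ((lam:ℝ)*x 1+ψ₀)
        + (AB (x 0) (x 2) (Lv k ψ₀ lam x) n).1 * (-sin ((lam:ℝ)*x 1+ψ₀) * lam)
      + ((deriv (fun t => (AB (x 0) (x 2) t n).2) (Lv k ψ₀ lam x) * dFk k ψ₀ lam (x 1))
          * (x 3 * sin ((lam:ℝ)*x 1+ψ₀))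
        + (AB (x 0) (x 2) (Lv k ψ₀ lam x) n).2 * (x 3 * (cos ((lam:ℝ)*x 1+ψ₀) * lam))) := by
  have h01 : ∀ t, Function.update x 1 t 0 = x 0 := fun t => Function.update_of_ne (by decide) _ _
  have h21 : ∀ t, Function.update x 1 t 2 = x 2 := fun t => Function.update_of_ne (by decide) _ _
  have h31 : ∀ t, Function.update x 1 t 3 = x 3 := fun t => Function.update_of_ne (by decide) _ _
  have h11 : ∀ t, Function.update x 1 t 1 = t := fun t => Function.update_self _ _ _
  -- the explicit model function
  set r := x 0; set p := x 2; set q := x 3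
  set l0 := Lv k ψ₀ lam x with hl0
  have hL : HasDerivAt (fun t => (1/2)*q^2 + Fk k ψ₀ lam t) (dFk k ψ₀ lam (x 1)) (x 1) :=
    (hasDerivAt_Fk k ψ₀ lam hs).const_add _
  have hl0' : (1/2)*q^2 + Fk k ψ₀ lam (x 1) = l0 := rfl
  have hA : HasDerivAt (fun t => (AB r p ((1/2)*q^2 + Fk k ψ₀ lam t) n).1)
      (deriv (fun t => (AB r p t n).1) l0 * dFk k ψ₀ lam (x 1)) (x 1) := by
    have hd := ((AB_differentiable_l r p l0 n).1).hasDerivAt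
    exact (hl0' ▸ hd : HasDerivAt (fun t => (AB r p t n).1) _ ((1/2)*q^2 + Fk k ψ₀ lam (x 1))).comp (x 1) hL
  have hB : HasDerivAt (fun t => (AB r p ((1/2)*q^2 + Fk k ψ₀ lam t) n).2)
      (deriv (fun t => (AB r p t n).2) l0 * dFk k ψ₀ lam (x 1)) (x 1) := by
    have hd := ((AB_differentiable_l r p l0 n).2).hasDerivAt
    exact (hl0' ▸ hd : HasDerivAt (fun t => (AB r p t n).2) _ ((1/2)*q^2 + Fk k ψ₀ lam (x 1))).comp (x 1) hL
  have hqS : HasDerivAt (fun t => q * sin ((lam:ℝ)*t+ψ₀)) (q * (cos ((lam:ℝ)*x 1+ψ₀) * lam)) (x 1) :=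
    (hasDerivAt_sin_theta ψ₀ lam (x 1)).const_mul q
  have hmodel : HasDerivAt (fun t =>
        (AB r p ((1/2)*q^2 + Fk k ψ₀ lam t) n).1 * cos ((lam:ℝ)*t+ψ₀)
        + (AB r p ((1/2)*q^2 + Fk k ψ₀ lam t) n).2 * (q * sin ((lam:ℝ)*t+ψ₀)))
      ((deriv (fun t => (AB r p t n).1) l0 * dFk k ψ₀ lam (x 1)) * cos ((lam:ℝ)*x 1+ψ₀)
        + (AB r p l0 n).1 * (-sin ((lam:ℝ)*x 1+ψ₀) * lam)
      + ((deriv (fun t => (AB r p t n).2) l0 * dFk k ψ₀ lam (x 1)) * (q * sin ((lam:ℝ)*x 1+ψ₀))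
        + (AB r p l0 n).2 * (q * (cos ((lam:ℝ)*x 1+ψ₀) * lam)))) (x 1) := by
    exact (hA.mul (hasDerivAt_cos_theta ψ₀ lam (x 1))).add (hB.mul hqS)
  have hev : (fun t => f (Function.update x 1 t)) =ᶠ[nhds (x 1)] (fun t =>
        (AB r p ((1/2)*q^2 + Fk k ψ₀ lam t) n).1 * cos ((lam:ℝ)*t+ψ₀)
        + (AB r p ((1/2)*q^2 + Fk k ψ₀ lam t) n).2 * (q * sin ((lam:ℝ)*t+ψ₀))) := by
    have hcont : ContinuousAt (fun t => sin ((lam:ℝ)*t+ψ₀)) (x 1) := by fun_prop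
    filter_upwards [hcont.eventually_ne hs] with t ht
    rw [hf _ (by rw [h01]; exact hr) (by rw [h11]; exact ht)]
    unfold frm Lv Fk
    rw [h01, h11, h21, h31]
  have := (hmodel.congr_of_eventuallyEq hev).deriv
  unfold pd
  rw [this]

lemma pd3_val (k ψ₀ : ℝ) (lam n : ℕ) (f : (Fin 4 → ℝ) → ℝ)
    (hf : ∀ y : Fin 4 → ℝ, y 0 ≠ 0 → sin ((lam:ℝ)*y 1+ψ₀) ≠ 0 → f y = frm k ψ₀ lam n y)
    (x : Fin 4 → ℝ) (hr : x 0 ≠ 0) (hs : sin ((lam:ℝ)*x 1+ψ₀) ≠ 0) :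
    pd 3 f x =
      (deriv (fun t => (AB (x 0) (x 2) t n).1) (Lv k ψ₀ lam x) * x 3) * cos ((lam:ℝ)*x 1+ψ₀)
      + ((deriv (fun t => (AB (x 0) (x 2) t n).2) (Lv k ψ₀ lam x) * x 3)
          * (x 3 * sin ((lam:ℝ)*x 1+ψ₀))
        + (AB (x 0) (x 2) (Lv k ψ₀ lam x) n).2 * sin ((lam:ℝ)*x 1+ψ₀)) := by
  have h03 : ∀ t, Function.update x 3 t 0 = x 0 := fun t => Function.update_of_ne (by decide) _ _
  have h13 : ∀ t, Function.update x 3 t 1 = x 1 := fun t => Function.update_of_ne (by decide) _ _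
  have h23 : ∀ t, Function.update x 3 t 2 = x 2 := fun t => Function.update_of_ne (by decide) _ _
  have h33 : ∀ t, Function.update x 3 t 3 = t := fun t => Function.update_self _ _ _
  set r := x 0; set p := x 2; set q := x 3
  set l0 := Lv k ψ₀ lam x with hl0
  set S := sin ((lam:ℝ)*x 1+ψ₀); set C := cos ((lam:ℝ)*x 1+ψ₀)
  have hL : HasDerivAt (fun t : ℝ => (1/2)*t^2 + Fk k ψ₀ lam (x 1)) q q := by
    have := ((hasDerivAt_pow 2 q).const_mul (1/2:ℝ)).add_const (Fk k ψ₀ lam (x 1))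
    refine this.congr_deriv ?_
    push_cast; ring
  have hl0' : (1/2)*q^2 + Fk k ψ₀ lam (x 1) = l0 := rfl
  have hA : HasDerivAt (fun t : ℝ => (AB r p ((1/2)*t^2 + Fk k ψ₀ lam (x 1)) n).1)
      (deriv (fun t => (AB r p t n).1) l0 * q) q := by
    have hd := ((AB_differentiable_l r p l0 n).1).hasDerivAt
    exact (hl0' ▸ hd : HasDerivAt (fun t => (AB r p t n).1) _ ((1/2)*q^2 + Fk k ψ₀ lam (x 1))).comp q hL
  have hB : HasDerivAt (fun t : ℝ => (AB r p ((1/2)*t^2 + Fk k ψ₀ lam (x 1)) n).2)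
      (deriv (fun t => (AB r p t n).2) l0 * q) q := by
    have hd := ((AB_differentiable_l r p l0 n).2).hasDerivAt
    exact (hl0' ▸ hd : HasDerivAt (fun t => (AB r p t n).2) _ ((1/2)*q^2 + Fk k ψ₀ lam (x 1))).comp q hL
  have htS : HasDerivAt (fun t : ℝ => t * S) S q := by
    simpa using (hasDerivAt_id q).mul_const S
  have hmodel : HasDerivAt (fun t : ℝ =>
        (AB r p ((1/2)*t^2 + Fk k ψ₀ lam (x 1)) n).1 * C
        + (AB r p ((1/2)*t^2 + Fk k ψ₀ lam (x 1)) n).2 * (t * S))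
      ((deriv (fun t => (AB r p t n).1) l0 * q) * C
        + ((deriv (fun t => (AB r p t n).2) l0 * q) * (q * S) + (AB r p l0 n).2 * S)) q :=
    (hA.mul_const C).add (hB.mul htS)
  have heq : (fun t => f (Function.update x 3 t)) = (fun t : ℝ =>
        (AB r p ((1/2)*t^2 + Fk k ψ₀ lam (x 1)) n).1 * C
        + (AB r p ((1/2)*t^2 + Fk k ψ₀ lam (x 1)) n).2 * (t * S)) := by
    funext t
    rw [hf _ (by rw [h03]; exact hr) (by rw [h13]; exact hs)]
    unfold frm Lv Fk
    rw [h03, h13, h23, h33]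
  unfold pd
  rw [heq, hmodel.deriv]

lemma pd2_val (k ψ₀ : ℝ) (lam n : ℕ) (f : (Fin 4 → ℝ) → ℝ)
    (hf : ∀ y : Fin 4 → ℝ, y 0 ≠ 0 → sin ((lam:ℝ)*y 1+ψ₀) ≠ 0 → f y = frm k ψ₀ lam (n+1) y)
    (x : Fin 4 → ℝ) (hr : x 0 ≠ 0) (hs : sin ((lam:ℝ)*x 1+ψ₀) ≠ 0) :
    pd 2 f x =
      ((n+1:ℕ) * (AB (x 0) (x 2) (Lv k ψ₀ lam x) n).1) * cos ((lam:ℝ)*x 1+ψ₀)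
      + ((n+1:ℕ) * (AB (x 0) (x 2) (Lv k ψ₀ lam x) n).2) * (x 3 * sin ((lam:ℝ)*x 1+ψ₀)) := by
  have h02 : ∀ t, Function.update x 2 t 0 = x 0 := fun t => Function.update_of_ne (by decide) _ _
  have h12 : ∀ t, Function.update x 2 t 1 = x 1 := fun t => Function.update_of_ne (by decide) _ _
  have h32 : ∀ t, Function.update x 2 t 3 = x 3 := fun t => Function.update_of_ne (by decide) _ _
  have h22 : ∀ t, Function.update x 2 t 2 = t := fun t => Function.update_self _ _ _
  set r := x 0; set q := x 3
  set l0 := Lv k ψ₀ lam x with hl0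
  set S := sin ((lam:ℝ)*x 1+ψ₀); set C := cos ((lam:ℝ)*x 1+ψ₀)
  obtain ⟨hAp, hBp⟩ := AB_hasDerivAt_p r l0 (x 2) n
  have hmodel : HasDerivAt (fun u : ℝ => (AB r u l0 (n+1)).1 * C + (AB r u l0 (n+1)).2 * (q * S))
      (((n+1:ℕ) * (AB r (x 2) l0 n).1) * C + ((n+1:ℕ) * (AB r (x 2) l0 n).2) * (q * S)) (x 2) :=
    (hAp.mul_const C).add (hBp.mul_const (q * S))
  have heq : (fun u => f (Function.update x 2 u)) =
      (fun u : ℝ => (AB r u l0 (n+1)).1 * C + (AB r u l0 (n+1)).2 * (q * S)) := by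
    funext u
    rw [hf _ (by rw [h02]; exact hr) (by rw [h12]; exact hs)]
    unfold frm Lv Fk
    rw [h02, h12, h22, h32]
    rfl
  unfold pd
  rw [heq, hmodel.deriv]

lemma pd0_val (k ψ₀ : ℝ) (lam n : ℕ) (f : (Fin 4 → ℝ) → ℝ)
    (hf : ∀ y : Fin 4 → ℝ, y 0 ≠ 0 → sin ((lam:ℝ)*y 1+ψ₀) ≠ 0 → f y = frm k ψ₀ lam (n+1) y)
    (x : Fin 4 → ℝ) (hr : x 0 ≠ 0) (hs : sin ((lam:ℝ)*x 1+ψ₀) ≠ 0) :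
    pd 0 f x =
      (-(2*(n+1)*(Lv k ψ₀ lam x)/(x 0)^2) * (AB (x 0) (x 2) (Lv k ψ₀ lam x) n).2)
          * cos ((lam:ℝ)*x 1+ψ₀)
      + ((n+1:ℕ)/(x 0)^2 * (AB (x 0) (x 2) (Lv k ψ₀ lam x) n).1)
          * (x 3 * sin ((lam:ℝ)*x 1+ψ₀)) := by
  have h10 : ∀ t, Function.update x 0 t 1 = x 1 := fun t => Function.update_of_ne (by decide) _ _
  have h20 : ∀ t, Function.update x 0 t 2 = x 2 := fun t => Function.update_of_ne (by decide) _ _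
  have h30 : ∀ t, Function.update x 0 t 3 = x 3 := fun t => Function.update_of_ne (by decide) _ _
  have h00 : ∀ t, Function.update x 0 t 0 = t := fun t => Function.update_self _ _ _
  set p := x 2; set q := x 3
  set l0 := Lv k ψ₀ lam x with hl0
  set S := sin ((lam:ℝ)*x 1+ψ₀); set C := cos ((lam:ℝ)*x 1+ψ₀)
  obtain ⟨hAr, hBr⟩ := AB_hasDerivAt_r p l0 hr n
  have hmodel : HasDerivAt (fun s : ℝ => (AB s p l0 (n+1)).1 * C + (AB s p l0 (n+1)).2 * (q * S))
      ((-(2*(n+1)*l0/(x 0)^2) * (AB (x 0) p l0 n).2) * C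
        + ((n+1:ℕ)/(x 0)^2 * (AB (x 0) p l0 n).1) * (q * S)) (x 0) :=
    (hAr.mul_const C).add (hBr.mul_const (q * S))
  have hev : (fun s => f (Function.update x 0 s)) =ᶠ[nhds (x 0)] (fun s : ℝ =>
      (AB s p l0 (n+1)).1 * C + (AB s p l0 (n+1)).2 * (q * S)) := by
    filter_upwards [continuousAt_id.eventually_ne hr] with s hsne
    rw [hf _ (by rw [h00]; exact hsne) (by rw [h10]; exact hs)]
    unfold frm Lv Fk
    rw [h00, h10, h20, h30]
    rfl
  unfold pd
  rw [(hmodel.congr_of_eventuallyEq hev).deriv]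

lemma closed_form (k ψ₀ : ℝ) (lam : ℕ) (hlam : 0 < lam) : ∀ (n : ℕ) (x : Fin 4 → ℝ),
    x 0 ≠ 0 → sin ((lam:ℝ)*x 1+ψ₀) ≠ 0 →
    ((Uop (1/(lam:ℝ)) (Fk k ψ₀ lam))^[n] (fun y => cos ((lam:ℝ)*y 1+ψ₀))) x
      = frm k ψ₀ lam n x := by
  intro n
  induction n with
  | zero => intro x hr hs; simp [frm, AB]
  | succ n ih =>
    intro x hr hs
    rw [Function.iterate_succ_apply']
    have hlam' : (lam:ℝ) ≠ 0 := Nat.cast_ne_zero.mpr hlam.ne'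
    have hd1 := pd1_val k ψ₀ lam n _ ih x hr hs
    have hd3 := pd3_val k ψ₀ lam n _ ih x hr hs
    have hdF : deriv (Fk k ψ₀ lam) (x 1) = dFk k ψ₀ lam (x 1) :=
      (hasDerivAt_Fk k ψ₀ lam hs).deriv
    rw [Uop, XL]
    rw [hd1, hd3, hdF, ih x hr hs]
    unfold frm
    simp only [AB]
    set da := deriv (fun t => (AB (x 0) (x 2) t n).1) (Lv k ψ₀ lam x)
    set db := deriv (fun t => (AB (x 0) (x 2) t n).2) (Lv k ψ₀ lam x)
    set a := (AB (x 0) (x 2) (Lv k ψ₀ lam x) n).1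
    set b := (AB (x 0) (x 2) (Lv k ψ₀ lam x) n).2
    unfold dFk Lv Fk
    set S := sin ((lam:ℝ)*x 1+ψ₀) with hS
    set C := cos ((lam:ℝ)*x 1+ψ₀) with hC
    field_simp
    ring

lemma pdH0 (k ψ₀ : ℝ) (lam : ℕ) (x : Fin 4 → ℝ) (hr : x 0 ≠ 0) :
    pd 0 (Hfun (Fk k ψ₀ lam)) x = -(2/(x 0)^3) * Lv k ψ₀ lam x := by
  have h10 : ∀ t : ℝ, Function.update x 0 t 1 = x 1 := fun t => Function.update_of_ne (by decide) _ _
  have h20 : ∀ t : ℝ, Function.update x 0 t 2 = x 2 := fun t => Function.update_of_ne (by decide) _ _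
  have h30 : ∀ t : ℝ, Function.update x 0 t 3 = x 3 := fun t => Function.update_of_ne (by decide) _ _
  have h00 : ∀ t : ℝ, Function.update x 0 t 0 = t := fun t => Function.update_self _ _ _
  have hinv : HasDerivAt (fun s : ℝ => 1/s^2)
      ((0*(x 0)^2 - 1*(2*(x 0)^(2-1)))/((x 0)^2)^2) (x 0) :=
    (hasDerivAt_const (x 0) 1).div (hasDerivAt_pow 2 (x 0)) (pow_ne_zero 2 hr)
  have hmodel := ((hinv.mul_const (Lv k ψ₀ lam x)).const_add ((1/2)*(x 2)^2))
  have heq : (fun s => Hfun (Fk k ψ₀ lam) (Function.update x 0 s)) =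
      (fun s : ℝ => (1/2)*(x 2)^2 + (1/s^2) * Lv k ψ₀ lam x) := by
    funext s
    unfold Hfun Lv
    rw [h00, h10, h20, h30]
  unfold pd
  rw [heq, hmodel.deriv]
  field_simp
  ring

lemma pdH1 (k ψ₀ : ℝ) (lam : ℕ) (x : Fin 4 → ℝ) (hs : sin ((lam:ℝ)*x 1+ψ₀) ≠ 0) :
    pd 1 (Hfun (Fk k ψ₀ lam)) x = (1/(x 0)^2) * dFk k ψ₀ lam (x 1) := by
  have h01 : ∀ t : ℝ, Function.update x 1 t 0 = x 0 := fun t => Function.update_of_ne (by decide) _ _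
  have h21 : ∀ t : ℝ, Function.update x 1 t 2 = x 2 := fun t => Function.update_of_ne (by decide) _ _
  have h31 : ∀ t : ℝ, Function.update x 1 t 3 = x 3 := fun t => Function.update_of_ne (by decide) _ _
  have h11 : ∀ t : ℝ, Function.update x 1 t 1 = t := fun t => Function.update_self _ _ _
  have hmodel := ((((hasDerivAt_Fk k ψ₀ lam hs).const_add ((1/2)*(x 3)^2)).const_mul
      (1/(x 0)^2)).const_add ((1/2)*(x 2)^2))
  have heq : (fun t => Hfun (Fk k ψ₀ lam) (Function.update x 1 t)) =
      (fun t : ℝ => (1/2)*(x 2)^2 + (1/(x 0)^2) * ((1/2)*(x 3)^2 + Fk k ψ₀ lam t)) := by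
    funext t
    unfold Hfun
    rw [h01, h11, h21, h31]
  unfold pd
  rw [heq, hmodel.deriv]

lemma pdH2 (k ψ₀ : ℝ) (lam : ℕ) (x : Fin 4 → ℝ) :
    pd 2 (Hfun (Fk k ψ₀ lam)) x = x 2 := by
  have h02 : ∀ t : ℝ, Function.update x 2 t 0 = x 0 := fun t => Function.update_of_ne (by decide) _ _
  have h12 : ∀ t : ℝ, Function.update x 2 t 1 = x 1 := fun t => Function.update_of_ne (by decide) _ _
  have h32 : ∀ t : ℝ, Function.update x 2 t 3 = x 3 := fun t => Function.update_of_ne (by decide) _ _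
  have h22 : ∀ t : ℝ, Function.update x 2 t 2 = t := fun t => Function.update_self _ _ _
  have hmodel := (((hasDerivAt_pow 2 (x 2)).const_mul (1/2:ℝ)).add_const
      ((1/(x 0)^2) * ((1/2)*(x 3)^2 + Fk k ψ₀ lam (x 1))))
  have heq : (fun u => Hfun (Fk k ψ₀ lam) (Function.update x 2 u)) =
      (fun u : ℝ => (1/2)*u^2 + (1/(x 0)^2) * ((1/2)*(x 3)^2 + Fk k ψ₀ lam (x 1))) := by
    funext u
    unfold Hfun
    rw [h02, h12, h22, h32]
  unfold pd
  rw [heq, hmodel.deriv]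
  push_cast
  ring

lemma pdH3 (k ψ₀ : ℝ) (lam : ℕ) (x : Fin 4 → ℝ) :
    pd 3 (Hfun (Fk k ψ₀ lam)) x = (1/(x 0)^2) * x 3 := by
  have h03 : ∀ t : ℝ, Function.update x 3 t 0 = x 0 := fun t => Function.update_of_ne (by decide) _ _
  have h13 : ∀ t : ℝ, Function.update x 3 t 1 = x 1 := fun t => Function.update_of_ne (by decide) _ _
  have h23 : ∀ t : ℝ, Function.update x 3 t 2 = x 2 := fun t => Function.update_of_ne (by decide) _ _
  have h33 : ∀ t : ℝ, Function.update x 3 t 3 = t := fun t => Function.update_self _ _ _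
  have hmodel := (((((hasDerivAt_pow 2 (x 3)).const_mul (1/2:ℝ)).add_const
      (Fk k ψ₀ lam (x 1))).const_mul (1/(x 0)^2)).const_add ((1/2)*(x 2)^2))
  have heq : (fun t => Hfun (Fk k ψ₀ lam) (Function.update x 3 t)) =
      (fun t : ℝ => (1/2)*(x 2)^2 + (1/(x 0)^2) * ((1/2)*t^2 + Fk k ψ₀ lam (x 1))) := by
    funext t
    unfold Hfun
    rw [h03, h13, h23, h33]
  unfold pd
  rw [heq, hmodel.deriv]
  push_cast
  ring

/-- For a positive integer `λ`, `μ = 1/λ`, `F(ψ) = k/sin²(λψ+ψ₀)`, `G(ψ) = cos(λψ+ψ₀)`,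
the function `I_λ = (p_r + (1/(λr))X_L)^λ G` is a first integral of
`H = ½p_r² + (1/r²)(½p_ψ² + F(ψ))`: `X_H(I_λ) = 0` where `r > 0` and `sin(λψ+ψ₀) ≠ 0`. -/
theorem first_integral_general (lam : ℕ) (hlam : 0 < lam) (k ψ₀ : ℝ)
    (x : Fin 4 → ℝ) (hr : 0 < x 0) (hs : sin (lam * x 1 + ψ₀) ≠ 0) :
    XHam (Hfun (fun ψ => k / (sin (lam * ψ + ψ₀))^2))
      ((Uop (1 / lam) (fun ψ => k / (sin (lam * ψ + ψ₀))^2))^[lam]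
        (fun y => cos (lam * y 1 + ψ₀))) x = 0 := by
  obtain ⟨m, rfl⟩ : ∃ m, lam = m + 1 := ⟨lam - 1, (Nat.succ_pred_eq_of_pos hlam).symm⟩
  have hr0 : x 0 ≠ 0 := ne_of_gt hr
  have hlam' : ((m+1:ℕ):ℝ) ≠ 0 := Nat.cast_ne_zero.mpr (Nat.succ_ne_zero m)
  show XHam (Hfun (Fk k ψ₀ (m+1)))
      ((Uop (1/((m+1:ℕ):ℝ)) (Fk k ψ₀ (m+1)))^[m+1] (fun y => cos (((m+1:ℕ):ℝ) * y 1 + ψ₀))) x = 0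
  have hf := closed_form k ψ₀ (m+1) (Nat.succ_pos m) (m+1)
  set f := (Uop (1/((m+1:ℕ):ℝ)) (Fk k ψ₀ (m+1)))^[m+1] (fun y => cos (((m+1:ℕ):ℝ) * y 1 + ψ₀)) with hfdef
  unfold XHam
  rw [pdH0 k ψ₀ (m+1) x hr0, pdH1 k ψ₀ (m+1) x hs, pdH2 k ψ₀ (m+1) x, pdH3 k ψ₀ (m+1) x,
    pd0_val k ψ₀ (m+1) m f hf x hr0 hs, pd1_val k ψ₀ (m+1) (m+1) f hf x hr0 hs,
    pd2_val k ψ₀ (m+1) m f hf x hr0 hs, pd3_val k ψ₀ (m+1) (m+1) f hf x hr0 hs]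
  have hABsucc1 : (AB (x 0) (x 2) (Lv k ψ₀ (m+1) x) (m+1)).1
      = x 2 * (AB (x 0) (x 2) (Lv k ψ₀ (m+1) x) m).1
        + 2*(Lv k ψ₀ (m+1) x)/(x 0) * (AB (x 0) (x 2) (Lv k ψ₀ (m+1) x) m).2 := rfl
  have hABsucc2 : (AB (x 0) (x 2) (Lv k ψ₀ (m+1) x) (m+1)).2
      = x 2 * (AB (x 0) (x 2) (Lv k ψ₀ (m+1) x) m).2
        - (AB (x 0) (x 2) (Lv k ψ₀ (m+1) x) m).1/(x 0) := rfl
  rw [hABsucc1, hABsucc2]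
  set da := deriv (fun t => (AB (x 0) (x 2) t (m+1)).1) (Lv k ψ₀ (m+1) x)
  set db := deriv (fun t => (AB (x 0) (x 2) t (m+1)).2) (Lv k ψ₀ (m+1) x)
  set a := (AB (x 0) (x 2) (Lv k ψ₀ (m+1) x) m).1
  set b := (AB (x 0) (x 2) (Lv k ψ₀ (m+1) x) m).2
  unfold dFk Lv Fk
  push_cast
  set S := sin (((m:ℝ)+1) * x 1 + ψ₀) with hS
  have hs' : S ≠ 0 := by rw [hS]; push_cast at hs ⊢; exact hs
  set C := cos (((m:ℝ)+1) * x 1 + ψ₀) with hC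
  field_simp
  ring
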